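/- Suppose f : [0,1] → ℝ is continuous and admits a jointly continuous local time η. Then for every u ∈ [0,1], 2·∫ᵤ¹ [η(1, f(t)) − η(t, f(t))] dt = ∫_ℝ (η(1,y) − η(u,y))² dy. -/

import Mathlib

open Set MeasureTheory intervalIntegral

/-- If `f` is continuous on `[0,1]` with a jointly continuous local time `η`
vanishing for `|y|` large, then for every `u ∈ [0,1]`,
`2·∫ᵤ¹ (η(1, f(t)) − η(t, f(t))) dt = ∫_ℝ (η(1,y) − η(u,y))² dy`. -/
theorem occupation_density_square_identity_from (f : ℝ → ℝ) (η : ℝ → ℝ → ℝ)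
    (hf : ContinuousOn f (Icc 0 1))
    (hη : ContinuousOn (fun p : ℝ × ℝ => η p.1 p.2) (Icc 0 1 ×ˢ univ))
    (hηnonneg : ∀ t ∈ Icc (0:ℝ) 1, ∀ y : ℝ, 0 ≤ η t y)
    (hocc : ∀ φ : BoundedContinuousFunction ℝ ℝ, ∀ t ∈ Icc (0:ℝ) 1,
      ∫ u in (0:ℝ)..t, φ (f u) = ∫ y : ℝ, φ y * η t y)
    (hsupp : ∃ C : ℝ, ∀ t ∈ Icc (0:ℝ) 1, ∀ y : ℝ, C ≤ |y| → η t y = 0) :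
    ∀ u ∈ Icc (0:ℝ) 1,
      2 * ∫ t in u..1, (η 1 (f t) - η t (f t)) = ∫ y : ℝ, (η 1 y - η u y) ^ 2 := by
  intro u hu
  obtain ⟨C, hC⟩ := hsupp
  obtain ⟨Mf, hMf⟩ : ∃ Mf : ℝ, ∀ t ∈ Icc (0:ℝ) 1, ‖f t‖ ≤ Mf :=
    IsCompact.exists_bound_of_continuousOn isCompact_Icc hf
  set M : ℝ := max C Mf with hM
  have hfM : ∀ t ∈ Icc (0:ℝ) 1, f t ∈ Icc (-M) M := by
    intro t ht
    have h := (hMf t ht).trans (le_max_right C Mf)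
    rw [Real.norm_eq_abs, abs_le] at h
    exact h
  have hz : ∀ t ∈ Icc (0:ℝ) 1, ∀ y : ℝ, y ∉ Icc (-M) M → η t y = 0 := by
    intro t ht y hy
    simp only [mem_Icc, not_and_or, not_le] at hy
    have h' : M < |y| := by
      rw [lt_abs]
      rcases hy with h | h
      · exact Or.inr (by linarith)
      · exact Or.inl h
    exact hC t ht y ((le_max_left C Mf).trans h'.le)
  have hMnonneg : 0 ≤ M := le_trans (norm_nonneg (f 0)) ((hMf 0 (by norm_num)).trans (le_max_right C Mf))
  have hslice : ∀ s ∈ Icc (0:ℝ) 1, Continuous (fun y => η s y) := by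
    intro s hs
    rw [← continuousOn_univ]
    exact hη.comp ((continuous_const.prodMk continuous_id).continuousOn)
      (fun y _ => mk_mem_prod hs (mem_univ y))
  have hdiag : ContinuousOn (fun t => η t (f t)) (Icc (0:ℝ) 1) :=
    hη.comp (continuousOn_id.prodMk hf) (fun t ht => ⟨ht, mem_univ _⟩)
  obtain ⟨B, hB⟩ : ∃ B : ℝ, ∀ p ∈ Icc (0:ℝ) 1 ×ˢ Icc (-M) M, ‖η p.1 p.2‖ ≤ B :=
    IsCompact.exists_bound_of_continuousOn (isCompact_Icc.prod isCompact_Icc)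
      (hη.mono (prod_mono_right (subset_univ _)))
  have hBnn : 0 ≤ B := le_trans (norm_nonneg _)
    (hB (0, 0) (mk_mem_prod (by norm_num) (by constructor <;> linarith)))
  have hBall : ∀ t ∈ Icc (0:ℝ) 1, ∀ y : ℝ, |η t y| ≤ B := by
    intro t ht y
    by_cases hy : y ∈ Icc (-M) M
    · exact hB (t, y) ⟨ht, hy⟩
    · simp [hz t ht y hy, hBnn]
  have hint : ∀ g : ℝ → ℝ, Continuous g → (∀ y : ℝ, y ∉ Icc (-M) M → g y = 0) →
      Integrable g := by
    intro g hg h0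
    exact hg.integrable_of_hasCompactSupport (HasCompactSupport.intro isCompact_Icc h0)
  have hII : ∀ g : ℝ → ℝ, Continuous g → ∀ a ∈ Icc (0:ℝ) 1, ∀ b ∈ Icc (0:ℝ) 1,
      IntervalIntegrable (fun t => g (f t)) volume a b := by
    intro g hg a ha b hb
    exact ((hg.comp_continuousOn hf).mono (uIcc_subset_Icc ha hb)).intervalIntegrable
  have h1m : (1:ℝ) ∈ Icc (0:ℝ) 1 := by norm_num
  have hc1 : Continuous (fun y => η 1 y) := hslice 1 h1m
  -- the step identity
  have hstep : ∀ s ∈ Icc (0:ℝ) 1, ∀ s' ∈ Icc (0:ℝ) 1,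
      (∫ y : ℝ, (η 1 y - η s y) ^ 2) - (∫ y : ℝ, (η 1 y - η s' y) ^ 2)
        = ∫ t in s..s', (2 * η 1 (f t) - η s (f t) - η s' (f t)) := by
    intro s hs s' hs'
    have hcs : Continuous (fun y => η s y) := hslice s hs
    have hcs' : Continuous (fun y => η s' y) := hslice s' hs'
    set g : ℝ → ℝ := fun y => 2 * η 1 y - η s y - η s' y with hgdef
    have hgc : Continuous g := ((continuous_const.mul hc1).sub hcs).sub hcs'
    have hgb : ∀ y : ℝ, ‖g y‖ ≤ 4 * B := by
      intro y
      have b1 := abs_le.mp (hBall 1 h1m y)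
      have b2 := abs_le.mp (hBall s hs y)
      have b3 := abs_le.mp (hBall s' hs' y)
      rw [Real.norm_eq_abs, abs_le]
      constructor <;> simp only [hgdef] <;> [linarith; linarith]
    set φ : BoundedContinuousFunction ℝ ℝ :=
      BoundedContinuousFunction.ofNormedAddCommGroup g hgc (4 * B) hgb with hφ
    have hφy : ∀ y : ℝ, φ y = g y := fun y => rfl
    have h1 := hocc φ s hs
    have h2 := hocc φ s' hs'
    simp only [hφy] at h1 h2
    have hsub : (∫ t in (0:ℝ)..s', g (f t)) - ∫ t in (0:ℝ)..s, g (f t)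
        = ∫ t in s..s', g (f t) :=
      integral_interval_sub_left (hII g hgc 0 (by norm_num) s' hs')
        (hII g hgc 0 (by norm_num) s hs)
    have int1 : Integrable (fun y => g y * η s' y) :=
      hint _ (hgc.mul hcs') (fun y hy => by simp [hz s' hs' y hy])
    have int2 : Integrable (fun y => g y * η s y) :=
      hint _ (hgc.mul hcs) (fun y hy => by simp [hz s hs y hy])
    have int3 : Integrable (fun y => (η 1 y - η s y) ^ 2) :=
      hint _ ((hc1.sub hcs).pow 2) (fun y hy => by simp [hz s hs y hy, hz 1 h1m y hy])
    have int4 : Integrable (fun y => (η 1 y - η s' y) ^ 2) :=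
      hint _ ((hc1.sub hcs').pow 2) (fun y hy => by simp [hz s' hs' y hy, hz 1 h1m y hy])
    have key : (∫ y : ℝ, g y * η s' y) - ∫ y : ℝ, g y * η s y
        = (∫ y : ℝ, (η 1 y - η s y) ^ 2) - ∫ y : ℝ, (η 1 y - η s' y) ^ 2 := by
      rw [← integral_sub int1 int2, ← integral_sub int3 int4]
      refine integral_congr_ae (Filter.Eventually.of_forall fun y => ?_)
      simp only [hgdef]
      ring
    calc (∫ y : ℝ, (η 1 y - η s y) ^ 2) - (∫ y : ℝ, (η 1 y - η s' y) ^ 2)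
        = (∫ y : ℝ, g y * η s' y) - ∫ y : ℝ, g y * η s y := key.symm
      _ = (∫ t in (0:ℝ)..s', g (f t)) - ∫ t in (0:ℝ)..s, g (f t) := by rw [h1, h2]
      _ = ∫ t in s..s', g (f t) := hsub
      _ = ∫ t in s..s', (2 * η 1 (f t) - η s (f t) - η s' (f t)) := rfl
  -- continuity / integrability of the time integrand
  have hH : ContinuousOn (fun t => η 1 (f t) - η t (f t)) (Icc (0:ℝ) 1) :=
    (hc1.comp_continuousOn hf).sub hdiag
  have hHI : ∀ a ∈ Icc (0:ℝ) 1, ∀ b ∈ Icc (0:ℝ) 1,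
      IntervalIntegrable (fun t => η 1 (f t) - η t (f t)) volume a b := by
    intro a ha b hb
    exact (hH.mono (uIcc_subset_Icc ha hb)).intervalIntegrable
  -- the final approximation argument
  have habs : ∀ ε : ℝ, 0 < ε →
      |2 * (∫ t in u..1, (η 1 (f t) - η t (f t))) - ∫ y : ℝ, (η 1 y - η u y) ^ 2| ≤ ε := by
    intro ε hε
    -- uniform continuity of η on the compact set
    have hucK := (isCompact_Icc.prod isCompact_Icc :
        IsCompact (Icc (0:ℝ) 1 ×ˢ Icc (-M) M)).uniformContinuousOn_of_continuous
        (hη.mono (prod_mono_right (subset_univ _)))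
    rw [Metric.uniformContinuousOn_iff] at hucK
    obtain ⟨δ, hδpos, hδ⟩ := hucK (ε/4) (by linarith)
    have htc : ∀ t ∈ Icc (0:ℝ) 1, ∀ s ∈ Icc (0:ℝ) 1, |t - s| < δ →
        ∀ y ∈ Icc (-M) M, |η t y - η s y| ≤ ε/4 := by
      intro t ht s hs hts y hy
      have hd : dist ((t, y) : ℝ × ℝ) (s, y) < δ := by
        rw [Prod.dist_eq]
        simp only [dist_self]
        exact max_lt (by rwa [Real.dist_eq]) hδpos
      have := hδ (t, y) (mk_mem_prod ht hy) (s, y) (mk_mem_prod hs hy) hd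
      rw [Real.dist_eq] at this
      exact this.le
    -- choose the partition
    obtain ⟨n, hn⟩ := exists_nat_gt (max ((1 - u) / δ) 1)
    have hn1 : (1:ℝ) < (n:ℝ) := lt_of_le_of_lt (le_max_right _ _) hn
    have hnpos : (0:ℝ) < (n:ℝ) := by linarith
    have hne : (n:ℝ) ≠ 0 := ne_of_gt hnpos
    have hmesh : (1 - u) / (n:ℝ) < δ := by
      rw [div_lt_iff₀ hnpos]
      have h1 : (1 - u) / δ < (n:ℝ) := lt_of_le_of_lt (le_max_left _ _) hn
      rw [div_lt_iff₀ hδpos] at h1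
      linarith
    have hmesh0 : 0 ≤ (1 - u) / (n:ℝ) := div_nonneg (by linarith [hu.2]) hnpos.le
    obtain ⟨a, ha0, han, hastep, hamem⟩ :
        ∃ a : ℕ → ℝ, a 0 = u ∧ a n = 1 ∧ (∀ k : ℕ, a (k + 1) - a k = (1 - u) / (n:ℝ))
          ∧ (∀ k : ℕ, k ≤ n → a k ∈ Icc (0:ℝ) 1) := by
      refine ⟨fun k => u + k * ((1 - u) / (n:ℝ)), by simp, ?_, ?_, ?_⟩
      · show u + (n:ℝ) * ((1 - u) / (n:ℝ)) = 1
        field_simp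
        ring
      · intro k
        show u + ((k:ℕ)+1:ℕ) * ((1 - u) / (n:ℝ)) - (u + (k:ℝ) * ((1 - u) / (n:ℝ)))
            = (1 - u) / (n:ℝ)
        push_cast
        ring
      · intro k hk
        constructor
        · have : 0 ≤ (k:ℝ) * ((1 - u) / (n:ℝ)) := mul_nonneg (Nat.cast_nonneg k) hmesh0
          show 0 ≤ u + (k:ℝ) * ((1 - u) / (n:ℝ))
          linarith [hu.1]
        · have hkn : (k:ℝ) ≤ (n:ℝ) := Nat.cast_le.mpr hk
          have : (k:ℝ) * ((1 - u) / (n:ℝ)) ≤ (n:ℝ) * ((1 - u) / (n:ℝ)) :=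
            mul_le_mul_of_nonneg_right hkn hmesh0
          have h2 : (n:ℝ) * ((1 - u) / (n:ℝ)) = 1 - u := by field_simp
          show u + (k:ℝ) * ((1 - u) / (n:ℝ)) ≤ 1
          linarith
    have hamono : ∀ k : ℕ, a k ≤ a (k + 1) := by
      intro k
      have := hastep k
      linarith
    -- telescoping the space integral
    have hG1 : (∫ y : ℝ, (η 1 y - η 1 y) ^ 2) = 0 := by simp
    have hGsum : (∫ y : ℝ, (η 1 y - η u y) ^ 2)
        = ∑ k ∈ Finset.range n, ((∫ y : ℝ, (η 1 y - η (a k) y) ^ 2)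
            - ∫ y : ℝ, (η 1 y - η (a (k+1)) y) ^ 2) := by
      rw [Finset.sum_range_sub' (fun k => ∫ y : ℝ, (η 1 y - η (a k) y) ^ 2) n]
      rw [ha0, han, hG1, sub_zero]
    -- splitting the time integral
    have hHsum : (∫ t in u..1, (η 1 (f t) - η t (f t)))
        = ∑ k ∈ Finset.range n, ∫ t in (a k)..(a (k+1)), (η 1 (f t) - η t (f t)) := by
      rw [sum_integral_adjacent_intervals (fun k hk =>
        hHI (a k) (hamem k (le_of_lt hk)) (a (k+1)) (hamem (k+1) hk))]
      rw [ha0, han]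
    -- rewrite the difference as a sum of small integrals
    have hXsum : 2 * (∫ t in u..1, (η 1 (f t) - η t (f t)))
          - (∫ y : ℝ, (η 1 y - η u y) ^ 2)
        = ∑ k ∈ Finset.range n, ∫ t in (a k)..(a (k+1)),
            (η (a k) (f t) + η (a (k+1)) (f t) - 2 * η t (f t)) := by
      rw [hGsum, hHsum, Finset.mul_sum, ← Finset.sum_sub_distrib]
      apply Finset.sum_congr rfl
      intro k hk
      rw [Finset.mem_range] at hk
      have hk1 : a k ∈ Icc (0:ℝ) 1 := hamem k (le_of_lt hk)
      have hk2 : a (k+1) ∈ Icc (0:ℝ) 1 := hamem (k+1) hk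
      rw [hstep (a k) hk1 (a (k+1)) hk2]
      have hcs : Continuous (fun y => η (a k) y) := hslice _ hk1
      have hcs' : Continuous (fun y => η (a (k+1)) y) := hslice _ hk2
      have hgc : Continuous (fun y => 2 * η 1 y - η (a k) y - η (a (k+1)) y) :=
        ((continuous_const.mul hc1).sub hcs).sub hcs'
      rw [← intervalIntegral.integral_const_mul,
        ← intervalIntegral.integral_sub
          ((hHI (a k) hk1 (a (k+1)) hk2).const_mul 2) (hII _ hgc (a k) hk1 (a (k+1)) hk2)]
      apply intervalIntegral.integral_congr
      intro t _
      ring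
    rw [hXsum]
    -- bound each summand
    have hbound : ∀ k ∈ Finset.range n,
        ‖∫ t in (a k)..(a (k+1)),
            (η (a k) (f t) + η (a (k+1)) (f t) - 2 * η t (f t))‖ ≤ (ε/2) * ((1 - u)/(n:ℝ)) := by
      intro k hk
      rw [Finset.mem_range] at hk
      have hk1 : a k ∈ Icc (0:ℝ) 1 := hamem k (le_of_lt hk)
      have hk2 : a (k+1) ∈ Icc (0:ℝ) 1 := hamem (k+1) hk
      have hab : |a (k+1) - a k| = (1 - u)/(n:ℝ) := by
        rw [hastep k]; exact abs_of_nonneg hmesh0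
      calc ‖∫ t in (a k)..(a (k+1)),
              (η (a k) (f t) + η (a (k+1)) (f t) - 2 * η t (f t))‖
          ≤ (ε/2) * |a (k+1) - a k| := by
            apply intervalIntegral.norm_integral_le_of_norm_le_const
            intro t htm
            rw [uIoc_of_le (hamono k)] at htm
            have ht : t ∈ Icc (0:ℝ) 1 :=
              ⟨le_trans hk1.1 htm.1.le, le_trans htm.2 hk2.2⟩
            have hfm : f t ∈ Icc (-M) M := hfM t ht
            have h1 : |η (a k) (f t) - η t (f t)| ≤ ε/4 := by
              apply htc _ hk1 _ ht _ _ hfm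
              rw [abs_sub_comm, abs_of_nonneg (by linarith [htm.1.le] : (0:ℝ) ≤ t - a k)]
              have := hastep k
              linarith [htm.2]
            have h2 : |η (a (k+1)) (f t) - η t (f t)| ≤ ε/4 := by
              apply htc _ hk2 _ ht _ _ hfm
              rw [abs_of_nonneg (by linarith [htm.2] : (0:ℝ) ≤ a (k+1) - t)]
              have := hastep k
              linarith [htm.1.le]
            rw [Real.norm_eq_abs]
            have := abs_add_le (η (a k) (f t) - η t (f t)) (η (a (k+1)) (f t) - η t (f t))
            have heq : η (a k) (f t) + η (a (k+1)) (f t) - 2 * η t (f t)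
                = (η (a k) (f t) - η t (f t)) + (η (a (k+1)) (f t) - η t (f t)) := by ring
            rw [heq]
            linarith
        _ = (ε/2) * ((1 - u)/(n:ℝ)) := by rw [hab]
    calc |∑ k ∈ Finset.range n, ∫ t in (a k)..(a (k+1)),
            (η (a k) (f t) + η (a (k+1)) (f t) - 2 * η t (f t))|
        ≤ ∑ k ∈ Finset.range n, ‖∫ t in (a k)..(a (k+1)),
            (η (a k) (f t) + η (a (k+1)) (f t) - 2 * η t (f t))‖ := by
          exact Finset.abs_sum_le_sum_abs _ _
      _ ≤ ∑ k ∈ Finset.range n, (ε/2) * ((1 - u)/(n:ℝ)) := Finset.sum_le_sum hbound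
      _ = (n:ℝ) * ((ε/2) * ((1 - u)/(n:ℝ))) := by
          rw [Finset.sum_const, Finset.card_range]; push_cast; ring
      _ = (ε/2) * (1 - u) := by field_simp
      _ ≤ ε := by nlinarith [hu.1, hu.2]
  -- conclude
  have hX : 2 * (∫ t in u..1, (η 1 (f t) - η t (f t)))
      - (∫ y : ℝ, (η 1 y - η u y) ^ 2) = 0 := by
    by_contra h
    have h0 : 0 < |2 * (∫ t in u..1, (η 1 (f t) - η t (f t)))
        - (∫ y : ℝ, (η 1 y - η u y) ^ 2)| := abs_pos.mpr h
    have := habs _ (half_pos h0)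
    rw [abs_le] at this
    rcases abs_cases (2 * (∫ t in u..1, (η 1 (f t) - η t (f t)))
        - (∫ y : ℝ, (η 1 y - η u y) ^ 2)) with ⟨he, _⟩ | ⟨he, _⟩ <;> linarith [this.1, this.2]
  linarith [hX]
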